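/- Let ι be a nonempty finite type, S : ι → ℝ logits, E ⊆ ι a nonempty set of edit tokens, δ ≥ 0, and ρ > 0 with ρ ≥ 1/|E|. Let p be a probability vector on ι satisfying p i ≥ ρ for every i ∈ E. Let A = softmax S and A^ESA = softmax S^ESA, where S^ESA i = S i + δ for i ∈ E and S^ESA i = S i otherwise. Then KL(p, A) − KL(p, A^ESA) ≥ δ·(|E|·ρ − 1) and δ·(|E|·ρ − 1) ≥ 0; in particular KL(p, A^ESA) ≤ KL(p, A). -/
import Mathlib


open Finset

/-- The softmax distribution of logits `S` on a finite type. -/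
noncomputable def softmax {ι : Type*} [Fintype ι] (S : ι → ℝ) (i : ι) : ℝ :=
  Real.exp (S i) / ∑ j, Real.exp (S j)

/-- Real-valued KL divergence between a probability vector `p` and a (positive) vector `q`. -/
noncomputable def KL {ι : Type*} [Fintype ι] (p q : ι → ℝ) : ℝ :=
  ∑ i, p i * Real.log (p i / q i)

theorem stmt0 {ι : Type*} [Fintype ι] [Nonempty ι] [DecidableEq ι]
    (S : ι → ℝ) (E : Finset ι) (hE : E.Nonempty)
    (δ : ℝ) (hδ : 0 ≤ δ) (ρ : ℝ) (hρ : 0 < ρ) (hρE : 1 / (E.card : ℝ) ≤ ρ)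
    (p : ι → ℝ) (hp0 : ∀ i, 0 ≤ p i) (hp1 : ∑ i, p i = 1)
    (hpE : ∀ i ∈ E, ρ ≤ p i) :
    δ * ((E.card : ℝ) * ρ - 1) ≤
        KL p (softmax S) - KL p (softmax (fun i => if i ∈ E then S i + δ else S i)) ∧
      0 ≤ δ * ((E.card : ℝ) * ρ - 1) ∧
      KL p (softmax (fun i => if i ∈ E then S i + δ else S i)) ≤ KL p (softmax S) := by
  classical
  set S' : ι → ℝ := fun i => if i ∈ E then S i + δ else S i with hS'
  set Z : ℝ := ∑ j, Real.exp (S j) with hZdef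
  set Z' : ℝ := ∑ j, Real.exp (S' j) with hZ'def
  have hZ : 0 < Z := Finset.sum_pos (fun j _ => Real.exp_pos _) Finset.univ_nonempty
  have hZ' : 0 < Z' := Finset.sum_pos (fun j _ => Real.exp_pos _) Finset.univ_nonempty
  have hcard : (0:ℝ) < (E.card : ℝ) := by exact_mod_cast Finset.card_pos.mpr hE
  have hEρ : 1 ≤ (E.card : ℝ) * ρ := by
    have := mul_le_mul_of_nonneg_left hρE (le_of_lt hcard)
    rwa [mul_one_div, div_self (ne_of_gt hcard)] at this
  have hnn : 0 ≤ δ * ((E.card : ℝ) * ρ - 1) := mul_nonneg hδ (by linarith)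
  have hsmS : ∀ i, softmax S i = Real.exp (S i) / Z := fun i => rfl
  have hsmS' : ∀ i, softmax S' i = Real.exp (S' i) / Z' := fun i => rfl
  have hterm : ∀ i, p i * Real.log (p i / softmax S i) - p i * Real.log (p i / softmax S' i)
      = p i * ((S' i - S i) - (Real.log Z' - Real.log Z)) := by
    intro i
    rcases eq_or_lt_of_le (hp0 i) with h0 | h0
    · simp [← h0]
    · have hA : softmax S i ≠ 0 := ne_of_gt (div_pos (Real.exp_pos _) hZ)
      have hA' : softmax S' i ≠ 0 := ne_of_gt (div_pos (Real.exp_pos _) hZ')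
      rw [Real.log_div (ne_of_gt h0) hA, Real.log_div (ne_of_gt h0) hA', hsmS, hsmS',
        Real.log_div (Real.exp_ne_zero _) (ne_of_gt hZ),
        Real.log_div (Real.exp_ne_zero _) (ne_of_gt hZ'), Real.log_exp, Real.log_exp]
      ring
  have hdiff : KL p (softmax S) - KL p (softmax S') =
      δ * (∑ i ∈ E, p i) - (Real.log Z' - Real.log Z) := by
    unfold KL
    rw [← Finset.sum_sub_distrib]
    have : ∀ i ∈ Finset.univ, p i * Real.log (p i / softmax S i) -
        p i * Real.log (p i / softmax S' i)
        = (if i ∈ E then δ * p i else 0) - (Real.log Z' - Real.log Z) * p i := by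
      intro i _
      rw [hterm i]
      by_cases h : i ∈ E <;> simp [hS', h] <;> ring
    rw [Finset.sum_congr rfl this, Finset.sum_sub_distrib, ← Finset.mul_sum, hp1,
      Finset.sum_ite_mem, Finset.univ_inter, ← Finset.mul_sum]
    ring
  have hsum : (E.card : ℝ) * ρ ≤ ∑ i ∈ E, p i := by
    calc (E.card : ℝ) * ρ = ∑ _i ∈ E, ρ := by rw [Finset.sum_const, nsmul_eq_mul]
    _ ≤ ∑ i ∈ E, p i := Finset.sum_le_sum hpE
  have hZ'le : Z' ≤ Real.exp δ * Z := by
    rw [hZ'def, hZdef, Finset.mul_sum]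
    apply Finset.sum_le_sum
    intro i _
    by_cases h : i ∈ E
    · simp [hS', h, Real.exp_add, mul_comm]
    · simp only [hS', h, if_false]
      have h1 : 1 ≤ Real.exp δ := Real.one_le_exp hδ
      nlinarith [Real.exp_pos (S i)]
  have hlogZ : Real.log Z' - Real.log Z ≤ δ := by
    have h1 : Real.log Z' ≤ Real.log (Real.exp δ * Z) := Real.log_le_log hZ' hZ'le
    rw [Real.log_mul (Real.exp_ne_zero _) (ne_of_gt hZ), Real.log_exp] at h1
    linarith
  have h1 : δ * ((E.card : ℝ) * ρ) ≤ δ * (∑ i ∈ E, p i) :=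
    mul_le_mul_of_nonneg_left hsum hδ
  refine ⟨by rw [hdiff]; nlinarith, hnn, by nlinarith [hdiff, h1, hlogZ, hnn]⟩
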